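/- Let H be a graph with v ≥ 3 vertices whose girth g satisfies g ≥ 20·ln v. Then the excess of H satisfies exc(H) ≤ ((2·ln v)/g)·v. -/

import Mathlib

open scoped Classical

namespace AHLproof
open SimpleGraph List

variable {V : Type*} {G : SimpleGraph V}

open AHLproof

set_option maxHeartbeats 1000000

/-- Non-backtracking walk: consecutive darts (a,b),(b,c) must have `c ≠ a`. -/
def NBW {x y : V} (w : G.Walk x y) : Prop :=
  List.Chain' (fun d₁ d₂ : G.Dart => d₂.snd ≠ d₁.fst) w.darts

lemma NBW.of_cons {x b y : V} {h : G.Adj x b} {w : G.Walk b y}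
    (hn : NBW (Walk.cons h w)) : NBW w := by
  have : (Walk.cons h w).darts = ⟨(x, b), h⟩ :: w.darts := rfl
  rw [NBW, this] at hn
  exact hn.tail

lemma NBW.nil {x y : V} (h : G.Adj x y) : NBW (Walk.cons h Walk.nil) := by
  simp [NBW, List.Chain']

lemma NBW.reverse {x y : V} {w : G.Walk x y} (hn : NBW w) : NBW w.reverse := by
  rw [NBW, List.Chain', Walk.darts_reverse, List.isChain_reverse, List.isChain_map]
  rw [NBW, List.Chain'] at hn
  refine hn.imp ?_
  intro a b hab
  simpa [Dart.symm, flip] using fun h => hab h.symm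

/-- In a walk whose support is nodup, an edge incident to the head must be the first edge. -/
lemma head_edge_first [DecidableEq V] {s t u : V} (c : G.Walk s t)
    (hnd : c.support.Nodup) (he : s(s, u) ∈ c.edges) :
    ∃ (h' : G.Adj s u) (c' : G.Walk u t), c = Walk.cons h' c' := by
  cases c with
  | nil => simp at he
  | cons h c' =>
    rename_i w
    rw [Walk.edges_cons, List.mem_cons] at he
    rcases he with he | he
    · have : u = w := by
        rcases Sym2.eq_iff.mp he with ⟨-, rfl⟩ | ⟨rfl, rfl⟩ <;> rfl
      subst this
      exact ⟨h, c', rfl⟩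
    · exfalso
      have hs : s ∈ c'.support := Walk.fst_mem_support_of_mem_edges c' he
      rw [Walk.support_cons, List.nodup_cons] at hnd
      exact hnd.1 hs

/-- From a non-backtracking walk with a repeated vertex, extract a cycle of at most the
same length. -/
lemma cycle_of_nbw_dup [DecidableEq V] :
    ∀ (n : ℕ) {a b : V} (p : G.Walk a b), p.length ≤ n → NBW p → ¬ p.support.Nodup →
    ∃ (z : V) (c : G.Walk z z), c.IsCycle ∧ c.length ≤ p.length := by
  intro n
  induction n with
  | zero =>
    intro a b p hl _ hnd
    exfalso
    rw [Nat.le_zero] at hl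
    cases p with
    | nil => exact hnd (by simp)
    | cons h q => simp at hl
  | succ n ih =>
    intro a b p hl hnb hnd
    cases p with
    | nil => exact absurd (by simp) hnd
    | cons h q =>
      rename_i a₁
      by_cases hq : q.support.Nodup
      · -- the duplication must involve `a`
        have ha : a ∈ q.support := by
          rw [Walk.support_cons, List.nodup_cons] at hnd
          by_contra ha
          exact hnd ⟨ha, hq⟩
        set c0 := q.takeUntil a ha with hc0
        have hpre : c0.support <+: q.support := by
          refine ⟨(q.dropUntil a ha).support.tail, ?_⟩
          rw [← Walk.support_append, Walk.take_spec]
        have hc0nd : c0.support.Nodup := hq.sublist hpre.sublist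
        have hdpre : c0.darts <+: q.darts := by
          refine ⟨(q.dropUntil a ha).darts, ?_⟩
          rw [← Walk.darts_append, Walk.take_spec]
        -- the closed walk
        have hnbcyc : NBW (Walk.cons h c0) := by
          rw [NBW] at hnb ⊢
          have h1 : (Walk.cons h q).darts = ⟨(a, a₁), h⟩ :: q.darts := rfl
          have h2 : (Walk.cons h c0).darts = ⟨(a, a₁), h⟩ :: c0.darts := rfl
          rw [h1] at hnb; rw [h2]
          exact hnb.prefix (List.cons_prefix_cons.mpr ⟨rfl, hdpre⟩)
        have hedge : s(a, a₁) ∉ c0.edges := by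
          intro hmem
          have hmem' : s(a₁, a) ∈ c0.edges := by rwa [Sym2.eq_swap]
          obtain ⟨h', c'', hc''⟩ := head_edge_first c0 hc0nd hmem'
          -- c'' : Walk a a; nodup of c0.support forces c''.length = 0
          have hlen0 : c''.length = 0 := by
            by_contra hne
            have hmem2 : a ∈ c''.support.tail := by
              cases c'' with
              | nil => exact absurd rfl hne
              | cons h₃ c₃ => simpa using Walk.end_mem_support c₃
            rw [hc'', Walk.support_cons, List.nodup_cons] at hc0nd
            have := hc0nd.2
            rw [Walk.support_eq_cons c''] at this
            rw [List.nodup_cons] at this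
            exact this.1 hmem2
          -- then c0 is the single edge a₁ → a, contradicting NBW of the closed walk
          cases c'' with
          | nil =>
            rw [hc''] at hnbcyc
            have hd : (Walk.cons h (Walk.cons h' Walk.nil)).darts
                = [⟨(a, a₁), h⟩, ⟨(a₁, a), h'⟩] := rfl
            rw [NBW, hd] at hnbcyc
            simp [List.Chain'] at hnbcyc
          | cons _ _ => simp at hlen0
        have hcyc : (Walk.cons h c0).IsCycle := by
          rw [Walk.cons_isCycle_iff]
          exact ⟨Walk.IsPath.mk' hc0nd, hedge⟩
        refine ⟨a, Walk.cons h c0, hcyc, ?_⟩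
        simp only [Walk.length_cons]
        have hle := Walk.length_takeUntil_le q ha
        rw [← hc0] at hle
        omega
      · have hq' : q.length ≤ n := by
          simp only [Walk.length_cons] at hl
          omega
        obtain ⟨z, c, hc, hlc⟩ := ih q hq' hnb.of_cons hq
        exact ⟨z, c, hc, by simp only [Walk.length_cons]; omega⟩

lemma end_mem_tail {u v : V} (w : G.Walk u v) (hw : w.length ≠ 0) :
    v ∈ w.support.tail := by
  cases w with
  | nil => simp at hw
  | cons h q => simpa using Walk.end_mem_support q

/-- Two distinct non-backtracking walks with the same endpoints and the same length
yield a cycle of at most twice that length. -/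
lemma cycle_of_two_nbw [DecidableEq V] :
    ∀ (n : ℕ) {x y : V} (w₁ w₂ : G.Walk x y), w₁.length = n → w₂.length = n →
      NBW w₁ → NBW w₂ → w₁ ≠ w₂ →
      ∃ (z : V) (c : G.Walk z z), c.IsCycle ∧ c.length ≤ 2 * n := by
  intro n
  induction n with
  | zero =>
    intro x y w₁ w₂ h1 h2 _ _ hne
    cases w₁ with
    | nil =>
      cases w₂ with
      | nil => exact absurd rfl hne
      | cons _ _ => simp at h2
    | cons _ _ => simp at h1
  | succ n ih =>
    intro x y w₁ w₂ h1 h2 hn1 hn2 hne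
    -- decompose from the front
    cases w₁ with
    | nil => simp at h1
    | cons h₁ u₁ =>
      cases w₂ with
      | nil => simp at h2
      | cons h₂ u₂ =>
        rename_i b₁ b₂
        by_cases hb : b₁ = b₂
        · subst hb
          have hu : u₁ ≠ u₂ := by
            intro hEq; exact hne (by rw [hEq])
          obtain ⟨z, c, hc, hlc⟩ := ih u₁ u₂
            (by simpa using h1) (by simpa using h2) hn1.of_cons hn2.of_cons hu
          exact ⟨z, c, hc, by omega⟩
        · -- decompose from the back, via reverses
          obtain ⟨c₁, k₁, v₁, hW₁⟩ :
              ∃ (c₁ : V) (k₁ : G.Adj y c₁) (v₁ : G.Walk c₁ x),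
                (Walk.cons h₁ u₁).reverse = Walk.cons k₁ v₁ := by
            cases hW : (Walk.cons h₁ u₁).reverse with
            | nil =>
              exfalso
              have := congrArg Walk.length hW
              simp at this
            | cons k v => exact ⟨_, k, v, rfl⟩
          obtain ⟨c₂, k₂, v₂, hW₂⟩ :
              ∃ (c₂ : V) (k₂ : G.Adj y c₂) (v₂ : G.Walk c₂ x),
                (Walk.cons h₂ u₂).reverse = Walk.cons k₂ v₂ := by
            cases hW : (Walk.cons h₂ u₂).reverse with
            | nil =>
              exfalso
              have := congrArg Walk.length hW
              simp at this
            | cons k v => exact ⟨_, k, v, rfl⟩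
          simp only [Walk.length_cons] at h1 h2
          by_cases hc : c₁ = c₂
          · subst hc
            have hv : v₁ ≠ v₂ := by
              intro hEq
              apply hne
              have : (Walk.cons h₁ u₁).reverse = (Walk.cons h₂ u₂).reverse := by
                rw [hW₁, hW₂, hEq]
              have := congrArg Walk.reverse this
              simpa using this
            have hl₁ : v₁.length = n := by
              have := congrArg Walk.length hW₁
              simp only [Walk.length_reverse, Walk.length_cons] at this
              omega
            have hl₂ : v₂.length = n := by
              have := congrArg Walk.length hW₂
              simp only [Walk.length_reverse, Walk.length_cons] at this
              omega
            have hnv₁ : NBW v₁ := by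
              have := hn1.reverse; rw [hW₁] at this; exact this.of_cons
            have hnv₂ : NBW v₂ := by
              have := hn2.reverse; rw [hW₂] at this; exact this.of_cons
            obtain ⟨z, c, hcyc, hlc⟩ := ih v₁ v₂ hl₁ hl₂ hnv₁ hnv₂ hv
            exact ⟨z, c, hcyc, by omega⟩
          · -- merge the two walks into a closed walk
            set A := Walk.cons h₁ u₁ with hA
            set B := Walk.cons h₂ u₂ with hB
            set M := A.append B.reverse with hM
            have hMnd : ¬ M.support.Nodup := by
              intro hnd
              rw [hM, Walk.support_append] at hnd
              rcases List.nodup_append'.mp hnd with ⟨-, -, hdisj⟩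
              refine hdisj (Walk.start_mem_support A) ?_
              exact end_mem_tail B.reverse (by simp [hB])
            have hMnb : NBW M := by
              rw [NBW, hM, Walk.darts_append, List.Chain', List.isChain_append]
              refine ⟨hn1, hn2.reverse, ?_⟩
              intro d₁ hd₁ d₂ hd₂
              -- d₁ is the last dart of A; compute it via hW₁
              have hAd : A.darts.getLast? = some (⟨(c₁, y), k₁.symm⟩ : G.Dart) := by
                have hA' : A = (Walk.cons k₁ v₁).reverse := by
                  have h' := congrArg Walk.reverse hW₁
                  rwa [Walk.reverse_reverse] at h'
                rw [hA', Walk.darts_reverse, List.getLast?_reverse, List.head?_map]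
                simp only [Walk.darts_cons, List.head?_cons, Option.map_some]
                rfl
              have hBd : B.reverse.darts.head? = some (⟨(y, c₂), k₂⟩ : G.Dart) := by
                rw [hW₂]
                simp [Walk.darts_cons]
              rw [hAd, Option.mem_def, Option.some.injEq] at hd₁
              rw [hBd, Option.mem_def, Option.some.injEq] at hd₂
              subst hd₁; subst hd₂
              simpa using fun hEq => hc hEq.symm
            have hlM : M.length = 2 * (n + 1) := by
              have hh : M.length = A.length + B.length := by
                rw [hM, Walk.length_append, Walk.length_reverse]
              rw [hh, hA, hB]
              simp only [Walk.length_cons]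
              omega
            obtain ⟨z, c, hcyc, hlc⟩ :=
              cycle_of_nbw_dup M.length M le_rfl hMnb hMnd
            exact ⟨z, c, hcyc, by omega⟩

/-! ### The counting machinery on a min-degree-2 core -/

section Counting

variable [Fintype V] [DecidableEq V] (H : SimpleGraph V) (S : Finset V)

/-- degree within `S` -/
noncomputable def degS (v : V) : ℕ := (S.filter fun u => H.Adj v u).card

/-- directed edges within `S` -/
noncomputable def DS : Finset (V × V) := (S ×ˢ S).filter fun p => H.Adj p.1 p.2

lemma mem_DS {e : V × V} : e ∈ DS H S ↔ e.1 ∈ S ∧ e.2 ∈ S ∧ H.Adj e.1 e.2 := by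
  simp [DS, Finset.mem_filter, Finset.mem_product, and_assoc]

/-- non-backtracking predecessors of a directed edge -/
noncomputable def preds (e : V × V) : Finset (V × V) :=
  (DS H S).filter fun f => f.2 = e.1 ∧ f.1 ≠ e.2

lemma preds_subset (e : V × V) : preds H S e ⊆ DS H S := Finset.filter_subset _ _

lemma preds_eq {e : V × V} (he : e ∈ DS H S) :
    preds H S e = ((S.filter fun u => H.Adj e.1 u).erase e.2).image fun w => (w, e.1) := by
  obtain ⟨h1, h2, h3⟩ := (mem_DS H S).mp he
  ext f
  obtain ⟨a, b⟩ := f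
  simp only [preds, Finset.mem_filter, mem_DS, Finset.mem_image, Finset.mem_erase]
  constructor
  · rintro ⟨⟨hf1, hf2, hadj⟩, hfe, hne⟩
    skip
    subst hfe
    exact ⟨a, ⟨hne, hf1, hadj.symm⟩, rfl⟩
  · rintro ⟨w, ⟨hne, hwS, hadj⟩, hEq⟩
    rw [Prod.mk.injEq] at hEq
    obtain ⟨rfl, rfl⟩ := hEq
    exact ⟨⟨hwS, h1, hadj.symm⟩, rfl, hne⟩

lemma card_preds {e : V × V} (he : e ∈ DS H S) :
    (preds H S e).card = degS H S e.1 - 1 := by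
  obtain ⟨h1, h2, h3⟩ := (mem_DS H S).mp he
  rw [preds_eq H S he, Finset.card_image_of_injective _ (fun a b hab => by
    simpa using congrArg Prod.fst hab), Finset.card_erase_of_mem]
  · rfl
  · exact Finset.mem_filter.mpr ⟨h2, h3⟩

lemma card_succs {e : V × V} (he : e ∈ DS H S) :
    ((DS H S).filter fun f => e.2 = f.1 ∧ e.1 ≠ f.2).card = degS H S e.2 - 1 := by
  obtain ⟨h1, h2, h3⟩ := (mem_DS H S).mp he
  have hset : ((DS H S).filter fun f => e.2 = f.1 ∧ e.1 ≠ f.2)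
      = ((S.filter fun u => H.Adj e.2 u).erase e.1).image fun w => (e.2, w) := by
    ext f
    obtain ⟨a, b⟩ := f
    simp only [Finset.mem_filter, mem_DS, Finset.mem_image, Finset.mem_erase]
    constructor
    · rintro ⟨⟨hf1, hf2, hadj⟩, hfe, hne⟩
      skip
      subst hfe
      exact ⟨b, ⟨fun hEq => hne hEq.symm, hf2, hadj⟩, rfl⟩
    · rintro ⟨w, ⟨hne, hwS, hadj⟩, hEq⟩
      rw [Prod.mk.injEq] at hEq
      obtain ⟨rfl, rfl⟩ := hEq
      exact ⟨⟨h2, hwS, hadj⟩, rfl, fun hEq => hne hEq.symm⟩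
  rw [hset, Finset.card_image_of_injective _ (fun a b hab => by
    simpa using congrArg Prod.snd hab), Finset.card_erase_of_mem]
  · rfl
  · exact Finset.mem_filter.mpr ⟨h1, h3.symm⟩

lemma snd_fiber_card {v : V} (hv : v ∈ S) :
    ((DS H S).filter fun f => f.2 = v).card = degS H S v := by
  have hset : ((DS H S).filter fun f => f.2 = v)
      = (S.filter fun u => H.Adj v u).image fun w => (w, v) := by
    ext f
    obtain ⟨a, b⟩ := f
    simp only [Finset.mem_filter, mem_DS, Finset.mem_image]
    constructor
    · rintro ⟨⟨hf1, hf2, hadj⟩, hfe⟩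
      skip
      subst hfe
      exact ⟨a, ⟨hf1, hadj.symm⟩, rfl⟩
    · rintro ⟨w, hw, hEq⟩
      rw [Prod.mk.injEq] at hEq
      obtain ⟨rfl, rfl⟩ := hEq
      exact ⟨⟨hw.1, hv, hw.2.symm⟩, rfl⟩
  rw [hset, Finset.card_image_of_injective _ (fun a b hab => by
    simpa using congrArg Prod.fst hab)]
  rfl

lemma fst_fiber_card {v : V} (hv : v ∈ S) :
    ((DS H S).filter fun f => f.1 = v).card = degS H S v := by
  have hset : ((DS H S).filter fun f => f.1 = v)
      = (S.filter fun u => H.Adj v u).image fun w => (v, w) := by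
    ext f
    obtain ⟨a, b⟩ := f
    simp only [Finset.mem_filter, mem_DS, Finset.mem_image]
    constructor
    · rintro ⟨⟨hf1, hf2, hadj⟩, hfe⟩
      skip
      subst hfe
      exact ⟨b, ⟨hf2, hadj⟩, rfl⟩
    · rintro ⟨w, hw, hEq⟩
      rw [Prod.mk.injEq] at hEq
      obtain ⟨rfl, rfl⟩ := hEq
      exact ⟨⟨hv, hw.1, hw.2⟩, rfl⟩
  rw [hset, Finset.card_image_of_injective _ (fun a b hab => by
    simpa using congrArg Prod.snd hab)]
  rfl

lemma sum_over_snd {M : Type*} [AddCommMonoid M] (φ : V → M) :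
    ∑ f ∈ DS H S, φ f.2 = ∑ v ∈ S, (degS H S v) • φ v := by
  rw [← Finset.sum_fiberwise_of_maps_to (g := Prod.snd) (t := S)
    (fun f hf => ((mem_DS H S).mp hf).2.1) (fun f => φ f.2)]
  refine Finset.sum_congr rfl fun v hv => ?_
  have h1 : ∑ f ∈ (DS H S).filter (fun f => f.2 = v), φ f.2
      = ∑ _f ∈ (DS H S).filter (fun f => f.2 = v), φ v :=
    Finset.sum_congr rfl (fun f hf => by rw [(Finset.mem_filter.mp hf).2])
  rw [h1, Finset.sum_const, snd_fiber_card H S hv]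

lemma card_DS : (DS H S).card = ∑ v ∈ S, degS H S v := by
  have h := Finset.card_eq_sum_card_fiberwise (s := DS H S) (t := S) (f := Prod.fst)
    (fun f hf => ((mem_DS H S).mp hf).1)
  rw [h]
  exact Finset.sum_congr rfl fun v hv => fst_fiber_card H S hv

end Counting

section Counting2

variable [Fintype V] [DecidableEq V] (H : SimpleGraph V) (S : Finset V)

/-- number of NB walks of length `t+1` starting at `x` and ending with directed edge `e` -/
noncomputable def cnt : ℕ → V → V × V → ℕ
  | 0 => fun x e => if e ∈ DS H S ∧ e.1 = x then 1 else 0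
  | (t+1) => fun x e => if e ∈ DS H S then ∑ f ∈ preds H S e, cnt t x f else 0

/-- total number of NB walks of length `t+1` ending with `e` -/
noncomputable def cntT : ℕ → V × V → ℕ
  | 0 => fun e => if e ∈ DS H S then 1 else 0
  | (t+1) => fun e => if e ∈ DS H S then ∑ f ∈ preds H S e, cntT t f else 0

/-- entropy-like potential -/
noncomputable def ell : ℕ → V × V → ℝ
  | 0 => fun _ => 0
  | (t+1) => fun e => if e ∈ DS H S then
      (∑ f ∈ preds H S e, (ell t f + Real.log ((degS H S e.1 : ℝ) - 1)))
        / ((degS H S e.1 : ℝ) - 1)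
      else 0

variable {H S}

lemma cntT_eq_sum (t : ℕ) (e : V × V) : cntT H S t e = ∑ x ∈ S, cnt H S t x e := by
  induction t generalizing e with
  | zero =>
    simp only [cntT, cnt]
    by_cases he : e ∈ DS H S
    · have he1 : e.1 ∈ S := ((mem_DS H S).mp he).1
      rw [if_pos he]
      have hcong : ∀ x ∈ S, (if e ∈ DS H S ∧ e.1 = x then 1 else 0) = (if e.1 = x then (1:ℕ) else 0) :=
        fun x _ => by simp [he]
      rw [Finset.sum_congr rfl hcong, Finset.sum_ite_eq S e.1 (fun _ => (1:ℕ)), if_pos he1]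
    · rw [if_neg he]
      have hcong : ∀ x ∈ S, (if e ∈ DS H S ∧ e.1 = x then 1 else 0) = (0:ℕ) :=
        fun x _ => by simp [he]
      rw [Finset.sum_congr rfl hcong]
      simp
  | succ t ih =>
    simp only [cntT, cnt]
    by_cases he : e ∈ DS H S
    · rw [if_pos he]
      rw [Finset.sum_congr rfl (fun x (_ : x ∈ S) => if_pos he)]
      rw [Finset.sum_comm]
      exact Finset.sum_congr rfl fun f _ => ih f
    · rw [if_neg he]
      rw [Finset.sum_congr rfl (fun x (_ : x ∈ S) => if_neg he)]
      simp

lemma sum_ell (hS : ∀ v ∈ S, 2 ≤ degS H S v) (t : ℕ) :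
    ∑ e ∈ DS H S, ell H S t e
      = t * ∑ v ∈ S, (degS H S v : ℝ) * Real.log ((degS H S v : ℝ) - 1) := by
  induction t with
  | zero => simp [ell]
  | succ t ih =>
    have step : ∀ e ∈ DS H S, ell H S (t+1) e
        = ∑ f ∈ preds H S e,
            ((ell H S t f + Real.log ((degS H S f.2 : ℝ) - 1))
              / ((degS H S f.2 : ℝ) - 1)) := by
      intro e he
      simp only [ell]
      rw [if_pos he, Finset.sum_div]
      refine Finset.sum_congr rfl fun f hf => ?_
      have h2 : f.2 = e.1 := (Finset.mem_filter.mp hf).2.1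
      rw [h2]
    rw [Finset.sum_congr rfl step]
    have swap : ∑ e ∈ DS H S, ∑ f ∈ preds H S e,
          ((ell H S t f + Real.log ((degS H S f.2 : ℝ) - 1)) / ((degS H S f.2 : ℝ) - 1))
        = ∑ f ∈ DS H S, ∑ e ∈ DS H S,
            (if f.2 = e.1 ∧ f.1 ≠ e.2 then
              ((ell H S t f + Real.log ((degS H S f.2 : ℝ) - 1)) / ((degS H S f.2 : ℝ) - 1))
              else 0) := by
      rw [← Finset.sum_comm]
      exact Finset.sum_congr rfl fun e he => (Finset.sum_filter _ _)
    rw [swap]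
    have inner : ∀ f ∈ DS H S, (∑ e ∈ DS H S,
            (if f.2 = e.1 ∧ f.1 ≠ e.2 then
              ((ell H S t f + Real.log ((degS H S f.2 : ℝ) - 1)) / ((degS H S f.2 : ℝ) - 1))
              else 0))
        = ell H S t f + Real.log ((degS H S f.2 : ℝ) - 1) := by
      intro f hf
      rw [← Finset.sum_filter, Finset.sum_const, card_succs H S hf]
      have hd : 2 ≤ degS H S f.2 := hS _ ((mem_DS H S).mp hf).2.1
      have hcast : ((degS H S f.2 - 1 : ℕ) : ℝ) = (degS H S f.2 : ℝ) - 1 := by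
        push_cast [Nat.cast_sub (by omega : 1 ≤ degS H S f.2)]
        ring
      rw [nsmul_eq_mul, hcast]
      have hne : (degS H S f.2 : ℝ) - 1 ≠ 0 := by
        have : (2 : ℝ) ≤ (degS H S f.2 : ℝ) := by exact_mod_cast hd
        nlinarith
      field_simp
    rw [Finset.sum_congr rfl inner, Finset.sum_add_distrib, ih]
    have : ∑ f ∈ DS H S, Real.log ((degS H S f.2 : ℝ) - 1)
        = ∑ v ∈ S, (degS H S v : ℝ) * Real.log ((degS H S v : ℝ) - 1) := by
      rw [sum_over_snd H S (fun v => Real.log ((degS H S v : ℝ) - 1))]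
      exact Finset.sum_congr rfl fun v hv => by rw [nsmul_eq_mul]
    rw [this]
    push_cast
    ring

end Counting2

section Counting3

variable [Fintype V] [DecidableEq V] {H : SimpleGraph V} {S : Finset V}

lemma exp_ell_le_cntT (hS : ∀ v ∈ S, 2 ≤ degS H S v) :
    ∀ t, ∀ e ∈ DS H S, Real.exp (ell H S t e) ≤ (cntT H S t e : ℝ) := by
  intro t
  induction t with
  | zero =>
    intro e he
    simp only [ell, cntT]
    rw [if_pos he]
    simp
  | succ t ih =>
    intro e he
    have hd : 2 ≤ degS H S e.1 := hS _ ((mem_DS H S).mp he).1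
    set c : ℝ := (degS H S e.1 : ℝ) - 1 with hc
    have hc1 : (1 : ℝ) ≤ c := by
      have : (2 : ℝ) ≤ (degS H S e.1 : ℝ) := by exact_mod_cast hd
      rw [hc]; linarith
    have hc0 : (0 : ℝ) < c := by linarith
    have hcard : ((preds H S e).card : ℝ) = c := by
      rw [card_preds H S he, hc]
      push_cast [Nat.cast_sub (by omega : 1 ≤ degS H S e.1)]
      ring
    have key := Real.geom_mean_le_arith_mean_weighted (preds H S e)
      (fun _ => 1 / c) (fun f => c * Real.exp (ell H S t f))
      (fun f _ => by positivity)
      (by rw [Finset.sum_const, nsmul_eq_mul, hcard]; field_simp)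
      (fun f _ => by positivity)
    have hLHS : ∏ f ∈ preds H S e, (c * Real.exp (ell H S t f)) ^ (1 / c)
        = Real.exp (ell H S (t+1) e) := by
      have heach : ∀ f ∈ preds H S e, (c * Real.exp (ell H S t f)) ^ (1 / c)
          = Real.exp ((ell H S t f + Real.log c) * (1 / c)) := by
        intro f _
        rw [Real.rpow_def_of_pos (by positivity), Real.log_mul (ne_of_gt hc0)
          (ne_of_gt (Real.exp_pos _)), Real.log_exp]
        ring_nf
      rw [Finset.prod_congr rfl heach, ← Real.exp_sum]
      congr 1
      simp only [ell]
      rw [if_pos he, ← hc, Finset.sum_div]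
      refine (Finset.sum_congr rfl fun f _ => ?_).symm
      field_simp
    have hRHS : ∑ f ∈ preds H S e, (1 / c) * (c * Real.exp (ell H S t f))
        = ∑ f ∈ preds H S e, Real.exp (ell H S t f) := by
      refine Finset.sum_congr rfl fun f _ => ?_
      field_simp
    rw [hLHS, hRHS] at key
    refine key.trans ?_
    have : ∑ f ∈ preds H S e, Real.exp (ell H S t f)
        ≤ ∑ f ∈ preds H S e, (cntT H S t f : ℝ) :=
      Finset.sum_le_sum fun f hf => ih f (preds_subset H S e hf)
    refine this.trans ?_
    simp only [cntT]
    rw [if_pos he]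
    rw [Nat.cast_sum]

lemma jensen_exp_sum (hne : (DS H S).Nonempty) (t : ℕ) :
    ((DS H S).card : ℝ)
        * Real.exp ((∑ e ∈ DS H S, ell H S t e) / ((DS H S).card : ℝ))
      ≤ ∑ e ∈ DS H S, Real.exp (ell H S t e) := by
  set M : ℝ := ((DS H S).card : ℝ) with hM
  have hM0 : (0 : ℝ) < M := by
    rw [hM]
    exact_mod_cast Finset.card_pos.mpr hne
  have key := Real.geom_mean_le_arith_mean_weighted (DS H S)
    (fun _ => 1 / M) (fun e => Real.exp (ell H S t e))
    (fun f _ => by positivity)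
    (by rw [Finset.sum_const, nsmul_eq_mul]; field_simp; exact hM.symm)
    (fun f _ => by positivity)
  have hLHS : ∏ e ∈ DS H S, (Real.exp (ell H S t e)) ^ (1 / M)
      = Real.exp ((∑ e ∈ DS H S, ell H S t e) / M) := by
    have heach : ∀ e ∈ DS H S, (Real.exp (ell H S t e)) ^ (1 / M)
        = Real.exp (ell H S t e * (1 / M)) := by
      intro e _
      rw [Real.rpow_def_of_pos (Real.exp_pos _), Real.log_exp]
    rw [Finset.prod_congr rfl heach, ← Real.exp_sum]
    congr 1
    rw [Finset.sum_div]
    exact Finset.sum_congr rfl fun e _ => by ring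
  rw [hLHS] at key
  have : ∑ e ∈ DS H S, (1 / M) * Real.exp (ell H S t e)
      = (∑ e ∈ DS H S, Real.exp (ell H S t e)) / M := by
    rw [Finset.sum_div]
    exact Finset.sum_congr rfl fun e _ => by ring
  rw [this] at key
  calc M * Real.exp ((∑ e ∈ DS H S, ell H S t e) / M)
      ≤ M * ((∑ e ∈ DS H S, Real.exp (ell H S t e)) / M) := by
        exact mul_le_mul_of_nonneg_left key (le_of_lt hM0)
    _ = ∑ e ∈ DS H S, Real.exp (ell H S t e) := by field_simp

end Counting3

lemma two_of_sum_ge_two {α : Type*} {s : Finset α} {f : α → ℕ} (h : 2 ≤ ∑ a ∈ s, f a) :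
    (∃ a ∈ s, 2 ≤ f a) ∨ ∃ a ∈ s, ∃ b ∈ s, a ≠ b ∧ 1 ≤ f a ∧ 1 ≤ f b := by
  obtain ⟨a, ha, hfa⟩ : ∃ a ∈ s, f a ≠ 0 :=
    Finset.exists_ne_zero_of_sum_ne_zero (by omega)
  by_cases h2 : 2 ≤ f a
  · exact Or.inl ⟨a, ha, h2⟩
  · right
    have heq := Finset.add_sum_erase s f ha
    obtain ⟨b, hb, hfb⟩ : ∃ b ∈ s.erase a, f b ≠ 0 :=
      Finset.exists_ne_zero_of_sum_ne_zero (by omega)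
    exact ⟨a, ha, b, Finset.mem_of_mem_erase hb, (Finset.ne_of_mem_erase hb).symm,
      by omega, by omega⟩

lemma walk_eq_of_darts_eq {x y : V} :
    ∀ (w₁ w₂ : G.Walk x y), w₁.darts = w₂.darts → w₁ = w₂ := by
  intro w₁
  induction w₁ with
  | nil =>
    intro w₂ h
    cases w₂ with
    | nil => rfl
    | cons h₂ u₂ => simp [Walk.darts_cons] at h
  | cons h₁ u₁ ih =>
    intro w₂ hd
    cases w₂ with
    | nil => simp [Walk.darts_cons] at hd
    | cons h₂ u₂ =>
      simp only [Walk.darts_cons, List.cons.injEq] at hd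
      obtain ⟨hdart, htail⟩ := hd
      have hb := congrArg (fun d : G.Dart => d.toProd.2) hdart
      simp only at hb
      subst hb
      rw [ih u₂ htail]

section Extract

variable [Fintype V] [DecidableEq V] {H : SimpleGraph V} {S : Finset V}

lemma cnt_one_walk :
    ∀ (t : ℕ) (x : V) (e : V × V), 1 ≤ cnt H S t x e →
      ∃ w : H.Walk x e.2, w.length = t + 1 ∧ NBW w ∧
        w.darts.getLast?.map SimpleGraph.Dart.toProd = some e := by
  intro t
  induction t with
  | zero =>
    intro x e h
    simp only [cnt] at h
    by_cases he : e ∈ DS H S ∧ e.1 = x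
    swap
    · rw [if_neg he] at h; omega
    obtain ⟨heDS, hx⟩ := he
    subst hx
    have adj : H.Adj e.1 e.2 := ((mem_DS H S).mp heDS).2.2
    refine ⟨Walk.cons adj Walk.nil, by simp, NBW.nil adj, ?_⟩
    simp [Walk.darts_cons]
  | succ t ih =>
    intro x e h
    simp only [cnt] at h
    by_cases he : e ∈ DS H S
    swap
    · rw [if_neg he] at h; omega
    rw [if_pos he] at h
    obtain ⟨f, hf, hcnt⟩ : ∃ f ∈ preds H S e, cnt H S t x f ≠ 0 :=
      Finset.exists_ne_zero_of_sum_ne_zero (by omega)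
    obtain ⟨w, hwl, hwnb, hwlast⟩ := ih x f (by omega)
    obtain ⟨hfDS, hf2, hf1⟩ := Finset.mem_filter.mp hf
    have adj : H.Adj e.1 e.2 := ((mem_DS H S).mp he).2.2
    have adj' : H.Adj f.2 e.2 := by rw [hf2]; exact adj
    refine ⟨w.concat adj', ?_, ?_, ?_⟩
    · rw [Walk.length_concat]; omega
    · rw [NBW, Walk.darts_concat, List.concat_eq_append, List.Chain', List.isChain_append]
      refine ⟨hwnb, List.isChain_singleton _, ?_⟩
      intro d₁ hd₁ d₂ hd₂
      simp only [List.head?_cons, Option.mem_def, Option.some.injEq] at hd₂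
      subst hd₂
      have : d₁.toProd = f := by
        rw [Option.mem_def] at hd₁
        have := congrArg (Option.map SimpleGraph.Dart.toProd) hd₁
        rw [hwlast] at this
        simpa using this.symm
      have hfst : d₁.fst = f.1 := by rw [← this]
      show _ ≠ d₁.fst
      rw [hfst]
      exact fun hEq => hf1 hEq.symm
    · rw [Walk.darts_concat, List.concat_eq_append, List.getLast?_concat]
      simp only [Option.map_some]
      congr 1
      have : e = (e.1, e.2) := rfl
      rw [this, ← hf2]

lemma cnt_two_walks :
    ∀ (t : ℕ) (x : V) (e : V × V), 2 ≤ cnt H S t x e →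
      ∃ w₁ w₂ : H.Walk x e.2, w₁ ≠ w₂ ∧
        (w₁.length = t + 1 ∧ NBW w₁ ∧
          w₁.darts.getLast?.map SimpleGraph.Dart.toProd = some e) ∧
        (w₂.length = t + 1 ∧ NBW w₂ ∧
          w₂.darts.getLast?.map SimpleGraph.Dart.toProd = some e) := by
  intro t
  induction t with
  | zero =>
    intro x e h
    simp only [cnt] at h
    split at h <;> omega
  | succ t ih =>
    intro x e h
    simp only [cnt] at h
    by_cases he : e ∈ DS H S
    swap
    · rw [if_neg he] at h; omega
    rw [if_pos he] at h
    have adj : H.Adj e.1 e.2 := ((mem_DS H S).mp he).2.2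
    rcases two_of_sum_ge_two h with ⟨f, hf, h2⟩ | ⟨f₁, hf₁, f₂, hf₂, hne, h1, h2⟩
    · obtain ⟨hfDS, hfe2, hfe1⟩ := Finset.mem_filter.mp hf
      obtain ⟨w₁, w₂, hwne, ⟨hl₁, hnb₁, hlast₁⟩, ⟨hl₂, hnb₂, hlast₂⟩⟩ := ih x f h2
      have adj' : H.Adj f.2 e.2 := by rw [hfe2]; exact adj
      have ext : ∀ (w : H.Walk x f.2), w.length = t + 1 → NBW w →
          w.darts.getLast?.map SimpleGraph.Dart.toProd = some f →
          (w.concat adj').length = t + 2 ∧ NBW (w.concat adj') ∧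
            (w.concat adj').darts.getLast?.map SimpleGraph.Dart.toProd = some e := by
        intro w hwl hwnb hwlast
        refine ⟨by rw [Walk.length_concat]; omega, ?_, ?_⟩
        · rw [NBW, Walk.darts_concat, List.concat_eq_append, List.Chain', List.isChain_append]
          refine ⟨hwnb, List.isChain_singleton _, ?_⟩
          intro d₁ hd₁ d₂ hd₂
          simp only [List.head?_cons, Option.mem_def, Option.some.injEq] at hd₂
          subst hd₂
          have : d₁.toProd = f := by
            rw [Option.mem_def] at hd₁
            have := congrArg (Option.map SimpleGraph.Dart.toProd) hd₁
            rw [hwlast] at this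
            simpa using this.symm
          have hfst : d₁.fst = f.1 := by rw [← this]
          show _ ≠ d₁.fst
          rw [hfst]
          exact fun hEq => hfe1 hEq.symm
        · rw [Walk.darts_concat, List.concat_eq_append, List.getLast?_concat]
          simp only [Option.map_some]
          congr 1
          have : e = (e.1, e.2) := rfl
          rw [this, ← hfe2]
      obtain ⟨ha₁, ha₂, ha₃⟩ := ext w₁ hl₁ hnb₁ hlast₁
      obtain ⟨hb₁, hb₂, hb₃⟩ := ext w₂ hl₂ hnb₂ hlast₂
      refine ⟨w₁.concat adj', w₂.concat adj', ?_, ⟨ha₁, ha₂, ha₃⟩, ⟨hb₁, hb₂, hb₃⟩⟩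
      intro hEq
      apply hwne
      apply walk_eq_of_darts_eq
      have := congrArg Walk.darts hEq
      rw [Walk.darts_concat, Walk.darts_concat] at this
      rw [List.concat_eq_append, List.concat_eq_append] at this
      have := congrArg List.dropLast this
      simpa using this
    · obtain ⟨hfDS₁, hfe2₁, hfe1₁⟩ := Finset.mem_filter.mp hf₁
      obtain ⟨hfDS₂, hfe2₂, hfe1₂⟩ := Finset.mem_filter.mp hf₂
      obtain ⟨w₁, hl₁, hnb₁, hlast₁⟩ := cnt_one_walk t x f₁ h1
      obtain ⟨w₂, hl₂, hnb₂, hlast₂⟩ := cnt_one_walk t x f₂ h2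
      have adj₁ : H.Adj f₁.2 e.2 := by rw [hfe2₁]; exact adj
      have adj₂ : H.Adj f₂.2 e.2 := by rw [hfe2₂]; exact adj
      have ext : ∀ (f : V × V) (hfe2 : f.2 = e.1) (hfe1 : f.1 ≠ e.2)
          (adj' : H.Adj f.2 e.2) (w : H.Walk x f.2), w.length = t + 1 → NBW w →
          w.darts.getLast?.map SimpleGraph.Dart.toProd = some f →
          (w.concat adj').length = t + 2 ∧ NBW (w.concat adj') ∧
            (w.concat adj').darts.getLast?.map SimpleGraph.Dart.toProd = some e := by
        intro f hfe2 hfe1 adj' w hwl hwnb hwlast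
        refine ⟨by rw [Walk.length_concat]; omega, ?_, ?_⟩
        · rw [NBW, Walk.darts_concat, List.concat_eq_append, List.Chain', List.isChain_append]
          refine ⟨hwnb, List.isChain_singleton _, ?_⟩
          intro d₁ hd₁ d₂ hd₂
          simp only [List.head?_cons, Option.mem_def, Option.some.injEq] at hd₂
          subst hd₂
          have : d₁.toProd = f := by
            rw [Option.mem_def] at hd₁
            have := congrArg (Option.map SimpleGraph.Dart.toProd) hd₁
            rw [hwlast] at this
            simpa using this.symm
          have hfst : d₁.fst = f.1 := by rw [← this]
          show _ ≠ d₁.fst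
          rw [hfst]
          exact fun hEq => hfe1 hEq.symm
        · rw [Walk.darts_concat, List.concat_eq_append, List.getLast?_concat]
          simp only [Option.map_some]
          congr 1
          have : e = (e.1, e.2) := rfl
          rw [this, ← hfe2]
      obtain ⟨ha₁, ha₂, ha₃⟩ := ext f₁ hfe2₁ hfe1₁ adj₁ w₁ hl₁ hnb₁ hlast₁
      obtain ⟨hb₁, hb₂, hb₃⟩ := ext f₂ hfe2₂ hfe1₂ adj₂ w₂ hl₂ hnb₂ hlast₂
      refine ⟨w₁.concat adj₁, w₂.concat adj₂, ?_, ⟨ha₁, ha₂, ha₃⟩, ⟨hb₁, hb₂, hb₃⟩⟩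
      intro hEq
      apply hne
      have := congrArg Walk.darts hEq
      rw [Walk.darts_concat, Walk.darts_concat] at this
      rw [List.concat_eq_append, List.concat_eq_append] at this
      have hdeq : w₁.darts = w₂.darts := by
        have := congrArg List.dropLast this
        simpa using this
      have := congrArg (fun l : List H.Dart => l.getLast?.map SimpleGraph.Dart.toProd) hdeq
      rw [hlast₁, hlast₂] at this
      exact Option.some_injective _ this

end Extract

lemma dlog (d : ℕ) (hd : 2 ≤ d) :
    2 * ((d : ℝ) - 2) ≤ (d : ℝ) * Real.log ((d : ℝ) - 1) := by
  have hlog2 : (0.6931 : ℝ) ≤ Real.log 2 := by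
    have := Real.log_two_gt_d9; linarith
  have hlog3 : (1 : ℝ) ≤ Real.log 3 := by
    rw [Real.le_log_iff_exp_le (by norm_num : (0:ℝ) < 3)]
    have := Real.exp_one_lt_d9
    linarith
  by_cases h9 : d ≤ 8
  · interval_cases d
    · norm_num [Real.log_one]
    · -- d = 3 : 2 ≤ 3 log 2
      norm_num
      nlinarith
    · -- d = 4 : 4 ≤ 4 log 3
      norm_num
      nlinarith
    · -- d = 5 : 6 ≤ 5 log 4
      have h4 : Real.log 4 = 2 * Real.log 2 := by
        rw [show (4:ℝ) = 2^2 by norm_num, Real.log_pow]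
        push_cast; ring
      norm_num
      rw [h4]
      nlinarith
    · -- d = 6 : 8 ≤ 6 log 5
      have h45 : Real.log 4 ≤ Real.log 5 := Real.log_le_log (by norm_num) (by norm_num)
      have h4 : Real.log 4 = 2 * Real.log 2 := by
        rw [show (4:ℝ) = 2^2 by norm_num, Real.log_pow]
        push_cast; ring
      norm_num
      nlinarith
    · -- d = 7 : 10 ≤ 7 log 6
      have h6 : Real.log 6 = Real.log 2 + Real.log 3 := by
        rw [show (6:ℝ) = 2 * 3 by norm_num, Real.log_mul (by norm_num) (by norm_num)]
      norm_num
      nlinarith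
    · -- d = 8 : 12 ≤ 8 log 7
      have h67 : Real.log 6 ≤ Real.log 7 := Real.log_le_log (by norm_num) (by norm_num)
      have h6 : Real.log 6 = Real.log 2 + Real.log 3 := by
        rw [show (6:ℝ) = 2 * 3 by norm_num, Real.log_mul (by norm_num) (by norm_num)]
      norm_num
      nlinarith
  · -- d ≥ 9
    push_neg at h9
    have h8 : Real.log 8 ≤ Real.log ((d:ℝ) - 1) := by
      apply Real.log_le_log (by norm_num)
      have : (9 : ℝ) ≤ (d : ℝ) := by exact_mod_cast h9
      linarith
    have h8' : Real.log 8 = 3 * Real.log 2 := by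
      rw [show (8:ℝ) = 2^3 by norm_num, Real.log_pow]
      push_cast; ring
    have hd9 : (9 : ℝ) ≤ (d : ℝ) := by exact_mod_cast h9
    nlinarith

section Core

variable [Fintype V] [DecidableEq V] {H : SimpleGraph V}

lemma degS_erase (S : Finset V) (v : V) (hv : v ∈ S) (u : V) :
    (degS H (S.erase v) u : ℤ) = (degS H S u : ℤ) - (if H.Adj u v then 1 else 0) := by
  unfold degS
  rw [Finset.filter_erase]
  by_cases hadj : H.Adj u v
  · rw [if_pos hadj, Finset.card_erase_of_mem (Finset.mem_filter.mpr ⟨hv, hadj⟩)]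
    have h1 : 1 ≤ (Finset.filter (fun x => H.Adj u x) S).card :=
      Finset.card_pos.mpr ⟨v, Finset.mem_filter.mpr ⟨hv, hadj⟩⟩
    push_cast [Nat.cast_sub h1]
    ring
  · rw [if_neg hadj, Finset.erase_eq_of_notMem (fun hmem => hadj (Finset.mem_filter.mp hmem).2)]
    simp

lemma sum_deg_erase (S : Finset V) (v : V) (hv : v ∈ S) :
    (∑ u ∈ S.erase v, (degS H (S.erase v) u : ℤ))
      = (∑ u ∈ S, (degS H S u : ℤ)) - 2 * (degS H S v : ℤ) := by
  have h1 : ∑ u ∈ S.erase v, (degS H (S.erase v) u : ℤ)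
      = ∑ u ∈ S.erase v, ((degS H S u : ℤ) - (if H.Adj u v then 1 else 0)) :=
    Finset.sum_congr rfl fun u _ => degS_erase S v hv u
  rw [h1, Finset.sum_sub_distrib]
  have h2 : ∑ u ∈ S.erase v, (degS H S u : ℤ)
      = (∑ u ∈ S, (degS H S u : ℤ)) - (degS H S v : ℤ) := by
    rw [← Finset.add_sum_erase S _ hv]
    ring
  have h3 : (∑ u ∈ S.erase v, (if H.Adj u v then (1:ℤ) else 0)) = (degS H S v : ℤ) := by
    rw [Finset.sum_boole]
    congr 1
    rw [Finset.filter_erase]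
    rw [Finset.erase_eq_of_notMem (s := Finset.filter (fun x => H.Adj x v) S) (a := v)
      (fun hmem => (H.irrefl (Finset.mem_filter.mp hmem).2))]
    unfold degS
    congr 1
    exact Finset.filter_congr fun u _ => by rw [H.adj_comm]
  rw [h2, h3]
  ring

lemma core_exists :
    ∀ (k : ℕ) (S : Finset V), S.card ≤ k → ∃ T : Finset V,
      (∀ v ∈ T, 2 ≤ degS H T v) ∧
      ((∑ v ∈ S, (degS H S v : ℤ)) - 2 * S.card
        ≤ (∑ v ∈ T, (degS H T v : ℤ)) - 2 * T.card) := by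
  intro k
  induction k with
  | zero =>
    intro S hS
    have : S = ∅ := Finset.card_eq_zero.mp (by omega)
    subst this
    exact ⟨∅, by simp, le_rfl⟩
  | succ k ih =>
    intro S hS
    by_cases hgood : ∀ v ∈ S, 2 ≤ degS H S v
    · exact ⟨S, hgood, le_rfl⟩
    · push_neg at hgood
      obtain ⟨v, hv, hdeg⟩ := hgood
      have hcard : (S.erase v).card ≤ k := by
        rw [Finset.card_erase_of_mem hv]
        omega
      obtain ⟨T, hT1, hT2⟩ := ih (S.erase v) hcard
      refine ⟨T, hT1, le_trans ?_ hT2⟩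
      rw [sum_deg_erase S v hv, Finset.card_erase_of_mem hv]
      have h1 : 1 ≤ S.card := Finset.card_pos.mpr ⟨v, hv⟩
      have h2 : (degS H S v : ℤ) ≤ 1 := by exact_mod_cast Nat.lt_succ_iff.mp hdeg
      push_cast [Nat.cast_sub h1]
      omega

lemma sum_degS_univ : (∑ v : V, (degS H Finset.univ v : ℤ)) = 2 * H.edgeFinset.card := by
  have hcard : (DS H (Finset.univ : Finset V)).card = Fintype.card H.Dart := by
    rw [← Finset.card_univ]
    symm
    apply Finset.card_bij (fun (d : H.Dart) _ => d.toProd)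
    · intro d _
      rw [mem_DS]
      exact ⟨Finset.mem_univ _, Finset.mem_univ _, d.adj⟩
    · intro d₁ _ d₂ _ h
      exact SimpleGraph.Dart.ext _ _ h
    · intro e he
      exact ⟨⟨e, ((mem_DS H _).mp he).2.2⟩, Finset.mem_univ _, rfl⟩
  have := card_DS H (Finset.univ : Finset V)
  rw [hcard, SimpleGraph.dart_card_eq_twice_card_edges] at this
  exact_mod_cast congrArg (Nat.cast : ℕ → ℤ) this.symm

end Core

lemma endgame {E D L gr nr : ℝ} (hE : 2*E ≤ D) (hD0 : 0 ≤ D) (hL1 : 1 ≤ L)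
    (hg20 : 20*L ≤ gr) (hn0 : 0 < nr)
    (hkey : D*(gr - 4) ≤ (2*nr + D)*L) : E ≤ 2*L/gr*nr := by
  have hgr : (20:ℝ) ≤ gr := by linarith
  have hgrpos : (0:ℝ) < gr := by linarith
  have hL0 : (0:ℝ) < L := by linarith
  have h1 : D*gr ≥ D*(20*L) := mul_le_mul_of_nonneg_left hg20 hD0
  have h2 : 4*D ≤ 4*(D*L) := by nlinarith
  have h3 : 15*(D*L) ≤ 2*nr*L := by nlinarith
  have hD : D ≤ 2*nr/15 := by
    rw [le_div_iff₀ (by norm_num : (0:ℝ) < 15)]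
    nlinarith
  have h4 : D*gr ≤ (2*nr + D)*L + 4*(D*L) := by nlinarith
  have h5 : D*gr ≤ (8/3)*(nr*L) := by nlinarith
  rw [div_mul_eq_mul_div, le_div_iff₀ hgrpos]
  nlinarith

end AHLproof

open AHLproof

set_option maxHeartbeats 1000000

/-- Corollary 2.18, after Alon–Hoory–Linial.  Let `H` be a graph with
`v ≥ 3` vertices whose girth is at least `g`, where `g ≥ 20·ln v` (girth at least `g`
means `H` has no cycle of length less than `g`).  Then the excess `|E| − |V|` of `H` is
at most `((2·ln v)/g)·v`. -/
theorem excess_le_of_girth {V : Type*} [Fintype V] [DecidableEq V]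
    (H : SimpleGraph V) (g : ℕ)
    (hv : 3 ≤ Fintype.card V)
    (hgirth : (g : ℕ∞) ≤ H.egirth)
    (hg : 20 * Real.log (Fintype.card V) ≤ (g : ℝ)) :
    (H.edgeFinset.card : ℝ) - (Fintype.card V : ℝ)
      ≤ (2 * Real.log (Fintype.card V) / (g : ℝ)) * (Fintype.card V : ℝ) := by
  have hn3 : (3:ℝ) ≤ (Fintype.card V : ℝ) := by exact_mod_cast hv
  set nr : ℝ := (Fintype.card V : ℝ) with hnr
  have hn0 : (0:ℝ) < nr := by linarith
  have hL1 : (1:ℝ) ≤ Real.log nr := by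
    rw [Real.le_log_iff_exp_le hn0]
    have := Real.exp_one_lt_d9
    linarith
  set L : ℝ := Real.log nr with hL
  have hLpos : (0:ℝ) < L := by linarith
  have hg20 : (20:ℝ) ≤ (g:ℝ) := by nlinarith
  have hgpos : (0:ℝ) < (g:ℝ) := by linarith
  have hgN : 20 ≤ g := by exact_mod_cast hg20
  by_cases hmn : H.edgeFinset.card ≤ Fintype.card V
  · have h1 : (H.edgeFinset.card : ℝ) ≤ nr := by rw [hnr]; exact_mod_cast hmn
    have h2 : (0:ℝ) ≤ 2 * L / g * nr := by positivity
    linarith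
  push_neg at hmn
  have hm1 : Fintype.card V + 1 ≤ H.edgeFinset.card := hmn
  -- extract the 2-core
  obtain ⟨T, hT2, hTx⟩ := core_exists (H := H) Finset.univ.card Finset.univ le_rfl
  rw [sum_degS_univ, Finset.card_univ] at hTx
  set MT : ℕ := ∑ v ∈ T, degS H T v with hMT
  have hMTsum : (∑ v ∈ T, (degS H T v : ℤ)) = (MT : ℤ) := by rw [hMT]; push_cast; rfl
  rw [hMTsum] at hTx
  have hDS : (DS H T).card = MT := by rw [card_DS, hMT]
  have hTn : T.card ≤ Fintype.card V := Finset.card_le_univ T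
  have hMTbig : 2 * T.card + 2 ≤ MT := by omega
  have hne : (DS H T).Nonempty := Finset.card_pos.mp (by rw [hDS]; omega)
  set r' : ℕ := (g-1)/2 - 1 with hr'
  have h2r : 2*(r'+1) + 1 ≤ g := by omega
  have hr4 : ((g:ℝ) - 4) ≤ 2*(r':ℝ) := by
    have hle : g ≤ 2*r' + 4 := by omega
    have hle' := (Nat.cast_le (α := ℝ)).mpr hle
    push_cast at hle'
    linarith
  -- uniqueness of NB walks between endpoint pairs (high girth)
  have huniq : ∀ x y : V,
      (∑ e ∈ (DS H T).filter (fun e => e.2 = y), cnt H T r' x e) ≤ 1 := by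
    intro x y
    by_contra hcon
    push_neg at hcon
    have h2 : 2 ≤ ∑ e ∈ (DS H T).filter (fun e => e.2 = y), cnt H T r' x e := hcon
    have hcyc : ∃ (z : V) (c : H.Walk z z), c.IsCycle ∧ c.length ≤ 2*(r'+1) := by
      rcases two_of_sum_ge_two h2 with ⟨e, he, h2e⟩ | ⟨e₁, he₁, e₂, he₂, hnee, hc1, hc2⟩
      · obtain ⟨w₁, w₂, hwne, ⟨hl₁, hnb₁, -⟩, ⟨hl₂, hnb₂, -⟩⟩ := cnt_two_walks r' x e h2e
        exact cycle_of_two_nbw (r'+1) w₁ w₂ hl₁ hl₂ hnb₁ hnb₂ hwne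
      · obtain ⟨w₁, hl₁, hnb₁, hlast₁⟩ := cnt_one_walk r' x e₁ hc1
        obtain ⟨w₂, hl₂, hnb₂, hlast₂⟩ := cnt_one_walk r' x e₂ hc2
        have hy₁ : e₁.2 = y := (Finset.mem_filter.mp he₁).2
        have hy₂ : e₂.2 = y := (Finset.mem_filter.mp he₂).2
        set w₂' : H.Walk x e₁.2 := w₂.copy rfl (hy₂.trans hy₁.symm) with hw₂'
        have hl₂' : w₂'.length = r' + 1 := by rw [hw₂', SimpleGraph.Walk.length_copy]; exact hl₂
        have hnb₂' : NBW w₂' := by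
          rw [NBW, hw₂', SimpleGraph.Walk.darts_copy]
          exact hnb₂
        have hwne : w₁ ≠ w₂' := by
          intro hEq
          have hd := congrArg SimpleGraph.Walk.darts hEq
          rw [hw₂', SimpleGraph.Walk.darts_copy] at hd
          have := congrArg (fun l : List H.Dart => l.getLast?.map SimpleGraph.Dart.toProd) hd
          rw [hlast₁, hlast₂] at this
          exact hnee (Option.some_injective _ this)
        exact cycle_of_two_nbw (r'+1) w₁ w₂' hl₁ hl₂' hnb₁ hnb₂' hwne
    obtain ⟨z, c, hcyc, hclen⟩ := hcyc
    have hgle : (g : ℕ∞) ≤ (c.length : ℕ∞) := SimpleGraph.le_egirth.mp hgirth z c hcyc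
    have hgle' : g ≤ c.length := by exact_mod_cast hgle
    omega
  -- the total count is at most |T| * n
  have hW : (∑ e ∈ DS H T, cntT H T r' e) ≤ T.card * Fintype.card V := by
    have hrw : (∑ e ∈ DS H T, cntT H T r' e) = ∑ x ∈ T, ∑ e ∈ DS H T, cnt H T r' x e := by
      rw [Finset.sum_congr rfl (fun e (_ : e ∈ DS H T) => cntT_eq_sum r' e), Finset.sum_comm]
    rw [hrw]
    have hx : ∀ x ∈ T, (∑ e ∈ DS H T, cnt H T r' x e) ≤ Fintype.card V := by
      intro x _
      rw [← Finset.sum_fiberwise_of_maps_to (g := Prod.snd) (t := (Finset.univ : Finset V))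
        (fun f _ => Finset.mem_univ f.2) (cnt H T r' x)]
      calc ∑ y : V, ∑ e ∈ (DS H T).filter (fun e => e.2 = y), cnt H T r' x e
          ≤ ∑ _y : V, 1 := Finset.sum_le_sum (fun y _ => huniq x y)
        _ = Fintype.card V := by simp
    calc ∑ x ∈ T, ∑ e ∈ DS H T, cnt H T r' x e ≤ ∑ _x ∈ T, Fintype.card V :=
        Finset.sum_le_sum hx
      _ = T.card * Fintype.card V := by rw [Finset.sum_const, smul_eq_mul]
  -- analytic chain
  have hjen := jensen_exp_sum (H := H) (S := T) hne r'
  have hsum_exp_le : (∑ e ∈ DS H T, Real.exp (ell H T r' e))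
      ≤ ((∑ e ∈ DS H T, cntT H T r' e : ℕ) : ℝ) := by
    rw [Nat.cast_sum]
    exact Finset.sum_le_sum (fun e he => exp_ell_le_cntT hT2 r' e he)
  set Mr : ℝ := ((DS H T).card : ℝ) with hMr
  have hMr0 : (0:ℝ) < Mr := by
    rw [hMr]
    exact_mod_cast Finset.card_pos.mpr hne
  have hTcMr : (T.card : ℝ) ≤ Mr := by
    rw [hMr, hDS]
    exact_mod_cast by omega
  have hchain : Mr * Real.exp ((∑ e ∈ DS H T, ell H T r' e)/Mr) ≤ Mr * nr := by
    refine le_trans hjen (le_trans hsum_exp_le ?_)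
    have h1 : ((∑ e ∈ DS H T, cntT H T r' e : ℕ) : ℝ) ≤ (T.card : ℝ) * nr := by
      rw [hnr]
      exact_mod_cast hW
    refine le_trans h1 ?_
    nlinarith
  have hexp_le : Real.exp ((∑ e ∈ DS H T, ell H T r' e)/Mr) ≤ nr :=
    le_of_mul_le_mul_left hchain hMr0
  have hlog : (∑ e ∈ DS H T, ell H T r' e)/Mr ≤ L := by
    rw [hL, Real.le_log_iff_exp_le hn0]
    exact hexp_le
  have hLam := sum_ell hT2 r'
  set TT : ℝ := ∑ v ∈ T, (degS H T v : ℝ) * Real.log ((degS H T v : ℝ) - 1) with hTT'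
  have hMTc : (∑ v ∈ T, (degS H T v : ℝ)) = (MT:ℝ) := by rw [hMT]; push_cast; rfl
  have hTT : 2*((MT:ℝ) - 2*(T.card:ℝ)) ≤ TT := by
    have hstep : ∑ v ∈ T, (2*((degS H T v : ℝ) - 2)) ≤ TT :=
      Finset.sum_le_sum (fun v hv => dlog _ (hT2 v hv))
    have hcomp : ∑ v ∈ T, (2*((degS H T v : ℝ) - 2))
        = 2*((MT:ℝ) - 2*(T.card:ℝ)) := by
      rw [Finset.sum_congr rfl
        (fun v _ => (by ring : 2*((degS H T v : ℝ) - 2) = 2*(degS H T v : ℝ) - 4))]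
      rw [Finset.sum_sub_distrib, ← Finset.mul_sum, hMTc, Finset.sum_const, nsmul_eq_mul]
      ring
    rw [hcomp] at hstep
    linarith
  set D : ℝ := (MT:ℝ) - 2*(T.card:ℝ) with hD'
  have hD0 : (0:ℝ) ≤ D := by
    rw [hD']
    have : (2*T.card + 2 : ℝ) ≤ (MT:ℝ) := by exact_mod_cast hMTbig
    linarith
  have hE : 2*((H.edgeFinset.card : ℝ) - nr) ≤ D := by
    rw [hD', hnr]
    have hTxR : 2*(H.edgeFinset.card:ℝ) - 2*(Fintype.card V:ℝ)
        ≤ (MT:ℝ) - 2*(T.card:ℝ) := by exact_mod_cast hTx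
    linarith
  have hkey : D*((g:ℝ) - 4) ≤ (2*nr + D)*L := by
    have hΛ : (r':ℝ)*TT ≤ Mr*L := by
      rw [hLam] at hlog
      calc (r':ℝ)*TT = ((r':ℝ)*TT)/Mr*Mr := by field_simp
        _ ≤ L*Mr := mul_le_mul_of_nonneg_right hlog (le_of_lt hMr0)
        _ = Mr*L := by ring
    have h2D : (r':ℝ)*(2*D) ≤ (r':ℝ)*TT :=
      mul_le_mul_of_nonneg_left hTT (by positivity)
    have hMrD : Mr ≤ 2*nr + D := by
      rw [hMr, hDS, hD', hnr]
      have : (T.card : ℝ) ≤ (Fintype.card V : ℝ) := by exact_mod_cast hTn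
      linarith
    have hgD := mul_le_mul_of_nonneg_left hr4 hD0
    have hMrDL := mul_le_mul_of_nonneg_right hMrD (by linarith : (0:ℝ) ≤ L)
    have e1 : D*(2*(r':ℝ)) = (r':ℝ)*(2*D) := by ring
    linarith [hgD, h2D, hΛ, hMrDL, e1]
  have hfin := endgame hE hD0 hL1 hg hn0 hkey
  linarith
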